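/- Let K be a field of characteristic zero and f ∈ K[x] with deg f ≥ 2. For every even integer m ≥ 2, any solution (c₁, d₀, ..., c_{m-1}, d_m) in K[x] of the system (Ie)_m — d_m' = 0; c_{m-1}' = d_m; d_{m-2}' + m f d_m = f' c_{m-1}; c_{m-3}' + (m-1) f c_{m-1} = d_{m-2}; ...; d_0' + 2 f d_2 = f' c_1; f c_1 = d_0 — satisfies d_m = 0. -/

import Mathlib

open Polynomial

set_option linter.unusedSectionVars false

namespace Stmt8Aux

variable {K : Type*} [Field K] [CharZero K]

/-- Coefficient-wise `x`-derivative on `K[x][u]` (the outer variable `u` is a constant). -/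
noncomputable def dx (P : Polynomial (Polynomial K)) : Polynomial (Polynomial K) :=
  ⟨AddMonoidAlgebra.ofCoeff (Finsupp.mapRange (fun p => derivative p) derivative_zero P.toFinsupp.coeff)⟩

@[simp] lemma coeff_dx (P : Polynomial (Polynomial K)) (n : ℕ) :
    (dx P).coeff n = derivative (P.coeff n) := by
  rcases P with ⟨⟨P⟩⟩
  simp [dx, coeff_ofFinsupp, Finsupp.mapRange_apply]

lemma dx_add (P Q : Polynomial (Polynomial K)) : dx (P + Q) = dx P + dx Q := by ext n; simp

lemma dx_sub (P Q : Polynomial (Polynomial K)) : dx (P - Q) = dx P - dx Q := by ext n; simp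

@[simp] lemma dx_C (p : Polynomial K) : dx (C p) = C (derivative p) := by
  ext n; simp [coeff_C]; split_ifs <;> simp

@[simp] lemma dx_X : dx (X : Polynomial (Polynomial K)) = 0 := by
  ext n; simp [coeff_X]; split_ifs <;> simp

lemma dx_monomial (n : ℕ) (a : Polynomial K) :
    dx (monomial n a) = monomial n (derivative a) := by
  ext i; simp [coeff_monomial]; split_ifs <;> simp

lemma dx_mul (P Q : Polynomial (Polynomial K)) :
    dx (P * Q) = dx P * Q + P * dx Q := by
  ext n
  simp only [coeff_dx, coeff_mul, coeff_add, derivative_sum, derivative_mul,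
    Finset.sum_add_distrib]

/-- The operator `E(G) = u·G_x + f·G + 2fu·G_u`. -/
noncomputable def EE (f : Polynomial K) (G : Polynomial (Polynomial K)) :
    Polynomial (Polynomial K) :=
  X * dx G + C f * G + C (2 * f) * (X * derivative G)

/-- The operator `L(G) = E(G)_x + 2f·E(G)_u`. -/
noncomputable def LL (f : Polynomial K) (G : Polynomial (Polynomial K)) :
    Polynomial (Polynomial K) :=
  dx (EE f G) + C (2 * f) * derivative (EE f G)

lemma EE_add (f : Polynomial K) (P Q : Polynomial (Polynomial K)) :
    EE f (P + Q) = EE f P + EE f Q := by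
  simp only [EE, dx_add, derivative_add, mul_add]; ring

lemma LL_add (f : Polynomial K) (P Q : Polynomial (Polynomial K)) :
    LL f (P + Q) = LL f P + LL f Q := by
  simp only [LL, EE_add, dx_add, derivative_add, mul_add]; ring

lemma EE_q_mul {f F : Polynomial K} (hF : derivative F = 2 * f)
    (P : Polynomial (Polynomial K)) :
    EE f ((X - C F) * P) = (X - C F) * EE f P := by
  simp only [EE, dx_mul, derivative_mul, dx_sub, dx_X, dx_C, hF,
    derivative_sub, derivative_X, derivative_C]
  ring

lemma LL_q_mul {f F : Polynomial K} (hF : derivative F = 2 * f)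
    (P : Polynomial (Polynomial K)) :
    LL f ((X - C F) * P) = (X - C F) * LL f P := by
  simp only [LL, EE_q_mul hF, dx_mul, derivative_mul, dx_sub, dx_X, dx_C, hF,
    derivative_sub, derivative_X, derivative_C]
  ring

lemma LL_C {f : Polynomial K} {c : Polynomial K} (hc : derivative c = 0) :
    LL f (C c) = C (derivative f) * C c := by
  have hE : EE f (C c) = C (f * c) := by simp [EE, hc]
  rw [LL, hE, dx_C, derivative_C, mul_zero, add_zero, derivative_mul, hc, mul_zero,
    add_zero, C_mul]

/-- Chain rule for the evaluation `u := F`. -/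
lemma deriv_eval (F : Polynomial K) (P : Polynomial (Polynomial K)) :
    derivative (Polynomial.eval F P) =
      Polynomial.eval F (dx P) + derivative F * Polynomial.eval F (derivative P) := by
  induction P using Polynomial.induction_on' with
  | add p q hp hq => simp only [eval_add, derivative_add, dx_add, hp, hq]; ring
  | monomial n a =>
    rw [dx_monomial, derivative_monomial, eval_monomial, eval_monomial, eval_monomial]
    cases n with
    | zero => simp
    | succ k =>
      rw [derivative_mul, derivative_pow]
      push_cast
      ring_nf
      simp [Nat.add_sub_cancel]
      ring

/-- If `L(G) = f'·G` then the evaluation of `G` at `u := F` (an antiderivative of `2f`)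
is constant: indeed `c := eval F G` satisfies `F·c'' + 3f·c' = 0`, so `F³·(c')²` has zero
derivative, hence degree `0`, which forces `c' = 0`. -/
lemma eval_const {f F : Polynomial K} (hf : 2 ≤ f.natDegree) (hF : derivative F = 2 * f)
    (G : Polynomial (Polynomial K)) (hLG : LL f G = C (derivative f) * G) :
    derivative (Polynomial.eval F G) = 0 := by
  have hf0 : f ≠ 0 := by intro h; rw [h] at hf; simp at hf
  have hF1 : 1 ≤ F.natDegree := by
    by_contra h
    push_neg at h
    have h0 : F.natDegree = 0 := by omega
    have := eq_C_of_natDegree_eq_zero h0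
    rw [this, derivative_C] at hF
    exact hf0 (by
      have h2f : (2 : Polynomial K) * f = 0 := hF.symm
      rcases mul_eq_zero.mp h2f with h2 | h2
      · exact absurd h2 two_ne_zero
      · exact h2)
  have hFne : F ≠ 0 := by
    intro h; rw [h] at hF1; simp at hF1
  set c := Polynomial.eval F G with hc
  have hdc : derivative c =
      Polynomial.eval F (dx G) + 2 * f * Polynomial.eval F (derivative G) := by
    rw [hc, deriv_eval, hF]
  have h1 : Polynomial.eval F (EE f G) = F * derivative c + f * c := by
    rw [EE, eval_add, eval_add, eval_mul, eval_mul, eval_mul, eval_mul, eval_X, eval_C,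
      eval_C, hdc]
    ring
  have h2 : derivative (Polynomial.eval F (EE f G)) = derivative f * c := by
    have hev := congrArg (Polynomial.eval F) hLG
    rw [LL, eval_add, eval_mul, eval_mul, eval_C, eval_C] at hev
    rw [deriv_eval, hF]
    exact hev
  rw [h1, derivative_add, derivative_mul, derivative_mul, hF] at h2
  have h3 : F * derivative (derivative c) + 3 * f * derivative c = 0 := by
    linear_combination h2
  have h4 : derivative (F ^ 3 * (derivative c) ^ 2) = 0 := by
    rw [derivative_mul, derivative_pow, derivative_pow, hF]
    push_cast
    simp only [map_ofNat]
    linear_combination (2 * F ^ 2 * derivative c) * h3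
  by_contra hne
  have hdeg := natDegree_eq_zero_of_derivative_eq_zero h4
  rw [natDegree_mul (pow_ne_zero _ hFne) (pow_ne_zero _ hne), natDegree_pow,
    natDegree_pow] at hdeg
  omega

/-- Main induction on the `u`-degree: any `G` of degree `≤ k` with `L(G) = f'·G` has
constant top coefficient.  The step factors `G - eval F G = (u - F)·G₁` and applies the
inductive hypothesis to `G₁`, which satisfies the same equation. -/
lemma key {f F : Polynomial K} (hf : 2 ≤ f.natDegree) (hF : derivative F = 2 * f) :
    ∀ (k : ℕ) (G : Polynomial (Polynomial K)), G.natDegree ≤ k →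
      LL f G = C (derivative f) * G → derivative (G.coeff k) = 0 := by
  intro k
  induction k with
  | zero =>
    intro G hdeg hLG
    have hG : G = C (G.coeff 0) := (eq_C_of_natDegree_le_zero hdeg)
    have h := eval_const hf hF G hLG
    rw [hG, eval_C] at h
    exact h
  | succ k ih =>
    intro G hdeg hLG
    have hcc := eval_const hf hF G hLG
    set γ := Polynomial.eval F G with hγ
    have hroot : IsRoot (G - C γ) F := by simp [IsRoot, hγ]
    obtain ⟨G₁, hG₁⟩ := dvd_iff_isRoot.mpr hroot
    have hGeq : G = (X - C F) * G₁ + C γ := by rw [← hG₁]; ring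
    by_cases h0 : G₁ = 0
    · rw [hGeq, h0, mul_zero, zero_add, coeff_C, if_neg (Nat.succ_ne_zero k)]
      simp
    · have hq0 : (X - C F : Polynomial (Polynomial K)) ≠ 0 := X_sub_C_ne_zero F
      have hdeg1 : G₁.natDegree ≤ k := by
        have e1 : ((X - C F) * G₁).natDegree = 1 + G₁.natDegree := by
          rw [natDegree_mul hq0 h0, natDegree_X_sub_C]
        have e2 : ((X - C F) * G₁).natDegree ≤ k + 1 := by
          rw [← hG₁]
          refine le_trans (natDegree_sub_le _ _) ?_
          simp only [natDegree_C, max_le_iff]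
          exact ⟨hdeg, Nat.zero_le _⟩
        omega
      have hLG₁ : LL f G₁ = C (derivative f) * G₁ := by
        have hLCγ : LL f (C γ) = C (derivative f) * C γ := LL_C hcc
        have hsum : LL f ((X - C F) * G₁) + LL f (C γ) =
            C (derivative f) * ((X - C F) * G₁) + C (derivative f) * C γ := by
          rw [← LL_add, ← hGeq, hLG, hGeq]; ring
        rw [hLCγ] at hsum
        have h3 : LL f ((X - C F) * G₁) = C (derivative f) * ((X - C F) * G₁) :=
          add_right_cancel hsum
        rw [LL_q_mul hF] at h3
        refine mul_left_cancel₀ hq0 ?_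
        rw [h3]; ring
      have htop := ih G₁ hdeg1 hLG₁
      have hG1top : G₁.coeff (k + 1) = 0 :=
        coeff_eq_zero_of_natDegree_lt (lt_of_le_of_lt hdeg1 (Nat.lt_succ_self k))
      have hco : G.coeff (k + 1) = G₁.coeff k := by
        rw [hGeq, coeff_add, coeff_C, if_neg (Nat.succ_ne_zero k), add_zero, sub_mul,
          coeff_sub, coeff_X_mul, coeff_C_mul, hG1top, mul_zero, sub_zero]
      rw [hco]
      exact htop

/-- Antiderivatives exist in characteristic zero. -/
lemma exists_antideriv (p : Polynomial K) : ∃ F : Polynomial K, derivative F = p := by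
  refine ⟨∑ i ∈ Finset.range (p.natDegree + 1),
    C (p.coeff i * ((i : K) + 1)⁻¹) * X ^ (i + 1), ?_⟩
  rw [derivative_sum]
  have h : ∀ i ∈ Finset.range (p.natDegree + 1),
      derivative (C (p.coeff i * ((i : K) + 1)⁻¹) * X ^ (i + 1)) = monomial i (p.coeff i) := by
    intro i _
    have hne : ((i : K) + 1) ≠ 0 := Nat.cast_add_one_ne_zero i
    rw [derivative_C_mul_X_pow]
    simp only [Nat.add_sub_cancel, C_mul_X_pow_eq_monomial]
    congr 1
    push_cast
    field_simp
  rw [Finset.sum_congr rfl h]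
  exact (p.as_sum_range' (p.natDegree + 1) (Nat.lt_succ_self _)).symm

end Stmt8Aux

open Stmt8Aux in
/-- For even `m ≥ 2` and `deg f ≥ 2`, any solution of the system `(Ie)_m`
(with `c_i` for odd `i`, `d_i` for even `i`) satisfies `d_m = 0`. -/
theorem stmt8 (K : Type*) [Field K] [CharZero K] (f : Polynomial K)
    (hf : 2 ≤ f.natDegree) (m : ℕ) (hm : 2 ≤ m) (hme : Even m)
    (c d : ℕ → Polynomial K)
    (htop : derivative (d m) = 0)
    (htop2 : derivative (c (m - 1)) = d m)
    (heven : ∀ j, Even j → j + 2 ≤ m →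
      derivative (d j) + (j + 2) • (f * d (j + 2)) = derivative f * c (j + 1))
    (hodd : ∀ j, Odd j → j + 2 ≤ m - 1 →
      derivative (c j) + (j + 2) • (f * c (j + 2)) = d (j + 1))
    (hlow : f * c 1 = d 0) :
    d m = 0 := by
  obtain ⟨F, hF⟩ := exists_antideriv (2 * f)
  obtain ⟨M, hM⟩ : ∃ M : ℕ, m = 2 * M := by
    obtain ⟨r, hr⟩ := hme; exact ⟨r, by omega⟩
  have hM1 : 1 ≤ M := by omega
  set G : Polynomial (Polynomial K) :=
    ∑ i ∈ Finset.range M, monomial i (c (2 * i + 1)) with hG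
  have hGco : ∀ n, G.coeff n = if n < M then c (2 * n + 1) else 0 := by
    intro n
    rw [hG, finset_sum_coeff]
    simp only [coeff_monomial]
    rw [Finset.sum_ite_eq' (Finset.range M) n (fun i => c (2 * i + 1))]
    simp [Finset.mem_range]
  have hGdeg : G.natDegree ≤ M - 1 := by
    rw [natDegree_le_iff_coeff_eq_zero]
    intro N hN
    rw [hGco, if_neg (by omega)]
  -- the coefficients of `E(G)` are the `d`'s
  have hE : ∀ n, (EE f G).coeff n = if n ≤ M then d (2 * n) else 0 := by
    intro n
    rcases n with _ | j
    · rw [EE, coeff_add, coeff_add, mul_coeff_zero, coeff_X_zero, zero_mul,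
        coeff_C_mul, coeff_C_mul, mul_coeff_zero, coeff_X_zero, zero_mul, mul_zero,
        hGco]
      rw [if_pos (by omega : 0 < M), if_pos (Nat.zero_le M)]
      simpa using hlow
    · have e1 : (X * dx G).coeff (j + 1) = derivative (G.coeff j) := by
        rw [coeff_X_mul, coeff_dx]
      have e2 : (X * derivative G).coeff (j + 1) = G.coeff (j + 1) * (j + 1) := by
        rw [coeff_X_mul, coeff_derivative]
      rw [EE, coeff_add, coeff_add, e1, coeff_C_mul, coeff_C_mul, e2, hGco, hGco]
      by_cases h1 : j + 1 < M
      · rw [if_pos (by omega : j < M), if_pos h1, if_pos (by omega : j + 1 ≤ M)]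
        have hh := hodd (2 * j + 1) ⟨j, by ring⟩ (by omega)
        rw [nsmul_eq_mul] at hh
        have i1 : 2 * j + 1 + 2 = 2 * (j + 1) + 1 := by ring
        have i2 : 2 * j + 1 + 1 = 2 * (j + 1) := by ring
        rw [i1, i2] at hh
        push_cast at hh ⊢
        linear_combination hh
      · by_cases h2 : j + 1 = M
        · rw [if_pos (by omega : j < M), if_neg h1, if_pos (by omega : j + 1 ≤ M)]
          have i1 : 2 * j + 1 = m - 1 := by omega
          have i2 : 2 * (j + 1) = m := by omega
          rw [i1, i2, htop2]
          ring
        · rw [if_neg (by omega : ¬ j < M), if_neg h1, if_neg (by omega : ¬ j + 1 ≤ M)]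
          simp
  -- the system says exactly `L(G) = f'·G`
  have hL : LL f G = C (derivative f) * G := by
    refine Polynomial.ext fun n => ?_
    rw [LL, coeff_add, coeff_dx, coeff_C_mul, coeff_derivative, hE, hE, coeff_C_mul, hGco]
    rcases lt_trichotomy n M with hn | hn | hn
    · rw [if_pos (by omega : n ≤ M), if_pos (by omega : n + 1 ≤ M), if_pos hn]
      have hh := heven (2 * n) ⟨n, by ring⟩ (by omega)
      rw [nsmul_eq_mul] at hh
      have i1 : 2 * n + 2 = 2 * (n + 1) := by ring
      rw [i1] at hh
      push_cast at hh ⊢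
      linear_combination hh
    · rw [hn]
      rw [if_pos le_rfl, if_neg (by omega : ¬ M + 1 ≤ M), if_neg (by omega : ¬ M < M)]
      have i2 : 2 * M = m := hM.symm
      rw [i2, htop]
      ring
    · rw [if_neg (by omega : ¬ n ≤ M), if_neg (by omega : ¬ n + 1 ≤ M),
        if_neg (by omega : ¬ n < M)]
      simp
  have hkey := key hf hF (M - 1) G hGdeg hL
  rw [hGco, if_pos (by omega : M - 1 < M)] at hkey
  have i1 : 2 * (M - 1) + 1 = m - 1 := by omega
  rw [i1] at hkey
  rw [← htop2, hkey]
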